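/- Let A, B be associative unital K-algebras and v : A° → B° a morphism of coalgebras between their restricted duals. For each finite-codimensional two-sided ideal I of A there exists a finite-codimensional two-sided ideal J of B such that v((A/I)*) ⊆ (B/J)*, and the induced K-linear map u_I : B/I_v → A/I (the transpose of v restricted to (A/I)*, where I_v is the largest such J) is a homomorphism of K-algebras. -/

import Mathlib

/-! Setup: for an associative unital algebra `A` over a field `K`, two-sided ideals are
modeled by ring congruences `c : RingCon A` (the ideal being `{a | c a 0}`, with quotient
ring `c.Quotient`); "finite codimension" means the quotient is finite-dimensional over `K`.
`S K A` is the collection of such congruences, `hatCarrier K A` is the completion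
`Â = lim← A/I` (as the subalgebra of compatible families in the product of the quotients,
each quotient carrying the discrete topology), `iotaA : A → Â` the canonical map, and
`projHat c : Â → A/𝔞` the canonical projection. -/

variable {K : Type*} [Field K] {A : Type*} [Ring A] [Algebra K A]

namespace PaperStmt

noncomputable instance ringConAlgebra (c : RingCon A) : Algebra K c.Quotient where
  smul := (· • ·)
  algebraMap := (RingCon.mk' c).comp (algebraMap K A)
  commutes' := fun k x => Quotient.inductionOn' x fun a => by
    show ((algebraMap K A k : A) : c.Quotient) * (a : c.Quotient)
        = (a : c.Quotient) * ((algebraMap K A k : A) : c.Quotient)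
    rw [← RingCon.coe_mul, ← RingCon.coe_mul, Algebra.commutes]
  smul_def' := fun k x => Quotient.inductionOn' x fun a => by
    show k • (a : c.Quotient) = ((algebraMap K A k : A) : c.Quotient) * (a : c.Quotient)
    rw [← RingCon.coe_smul, ← RingCon.coe_mul, Algebra.smul_def]

variable (K A)

/-- The set of two-sided ideals (congruences) of finite codimension. -/
def S : Type _ := {c : RingCon A // FiniteDimensional K c.Quotient}

variable {K A}

/-- The factor (transition) map between quotients. -/
def factorHom {c d : RingCon A} (h : c ≤ d) : c.Quotient →+* d.Quotient where
  toFun := Quotient.map' id fun a b hab => h hab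
  map_one' := rfl
  map_mul' x y := Quotient.inductionOn₂' x y fun _ _ => rfl
  map_zero' := rfl
  map_add' x y := Quotient.inductionOn₂' x y fun _ _ => rfl

def factorAlg {c d : RingCon A} (h : c ≤ d) : c.Quotient →ₐ[K] d.Quotient :=
  { factorHom h with commutes' := fun _ => rfl }

@[simp] theorem factorHom_coe {c d : RingCon A} (h : c ≤ d) (a : A) :
    factorHom h (a : c.Quotient) = (a : d.Quotient) := rfl

variable (K A)

/-- The completion `Â` of `A` with respect to two-sided ideals of finite codimension,
as the subalgebra of compatible families in the product of the quotients. -/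
def hatCarrier : Subalgebra K (Π c : S K A, c.1.Quotient) where
  carrier := {x | ∀ (c d : S K A) (h : c.1 ≤ d.1), factorHom h (x c) = x d}
  mul_mem' {x y} hx hy := fun c d h => by
    show factorHom h (x c * y c) = x d * y d
    rw [map_mul, hx c d h, hy c d h]
  add_mem' {x y} hx hy := fun c d h => by
    show factorHom h (x c + y c) = x d + y d
    rw [map_add, hx c d h, hy c d h]
  one_mem' := fun c d h => map_one _
  algebraMap_mem' := fun k c d h => rfl

/-- The canonical map `ι : A → Â`. -/
def iotaA : A →ₐ[K] ↥(hatCarrier K A) where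
  toFun a := ⟨fun c => (a : c.1.Quotient), fun c d h => rfl⟩
  map_one' := rfl
  map_mul' a b := rfl
  map_zero' := rfl
  map_add' a b := rfl
  commutes' k := rfl

/-- Each quotient `A/I` carries the discrete topology, so that `Â` (as a subspace of the
product) carries the projective-limit topology. -/
instance (c : RingCon A) : TopologicalSpace c.Quotient := ⊥

variable {K A}

/-- The canonical projection `p_𝔞 : Â → A/𝔞`. -/
noncomputable def projHat (c : S K A) : ↥(hatCarrier K A) →ₐ[K] c.1.Quotient :=
  (Pi.evalAlgHom K _ c).comp (hatCarrier K A).val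

end PaperStmt

namespace PaperStmt

variable (K A)

/-- The restricted (Sweedler) dual `A°`: functionals on `A` vanishing on some two-sided
ideal of finite codimension. -/
noncomputable def restrictedDual : Submodule K (A →ₗ[K] K) where
  carrier := {α | ∃ c : RingCon A, FiniteDimensional K c.Quotient ∧ ∀ a, c a 0 → α a = 0}
  zero_mem' := by
    refine ⟨⊤, ?_, fun a _ => rfl⟩
    have : Subsingleton (⊤ : RingCon A).Quotient :=
      ⟨fun x y => Quotient.inductionOn₂' x y fun a b => Quotient.sound' trivial⟩
    exact Module.Finite.of_surjective (0 : K →ₗ[K] (⊤ : RingCon A).Quotient)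
      (fun x => ⟨0, Subsingleton.elim _ _⟩)
  add_mem' := by
    rintro α β ⟨c, hc, hvc⟩ ⟨d, hd, hvd⟩
    refine ⟨c ⊓ d, ?_, fun a ha => ?_⟩
    · haveI := hc; haveI := hd
      have hinj : Function.Injective
          (((factorAlg (K := K) (inf_le_left : c ⊓ d ≤ c)).toLinearMap).prod
            ((factorAlg (K := K) (inf_le_right : c ⊓ d ≤ d)).toLinearMap)) := by
        intro x y
        refine Quotient.inductionOn₂' x y (fun a b hab => ?_)
        have h1 : (a : c.Quotient) = (b : c.Quotient) := congrArg Prod.fst hab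
        have h2 : (a : d.Quotient) = (b : d.Quotient) := congrArg Prod.snd hab
        exact ((c ⊓ d).eq).2 (RingCon.inf_iff_and.2 ⟨(c.eq).1 h1, (d.eq).1 h2⟩)
      exact FiniteDimensional.of_injective _ hinj
    · have : c a 0 ∧ d a 0 := ⟨inf_le_left (α := RingCon A) ha, inf_le_right (α := RingCon A) ha⟩
      simp [map_add, hvc a this.1, hvd a this.2]
  smul_mem' := by
    rintro k α ⟨c, hc, hv⟩
    exact ⟨c, hc, fun a ha => by simp [hv a ha]⟩

end PaperStmt

open PaperStmt

set_option synthInstance.maxHeartbeats 1000000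
set_option maxHeartbeats 1000000


namespace PaperStmt

variable {K : Type*} [Field K] {A : Type*} [Ring A] [Algebra K A]

/-- The quotient map `A → A/c` as a `K`-linear map. -/
noncomputable def mkL (c : RingCon A) : A →ₗ[K] c.Quotient where
  toFun a := a
  map_add' a b := by rw [← RingCon.coe_add]
  map_smul' k a := by rw [RingHom.id_apply, ← RingCon.coe_smul]

@[simp] theorem mkL_apply (c : RingCon A) (a : A) : (mkL (K := K) c) a = (a : c.Quotient) := rfl

/-- Functionals on the quotient `A/c`, pulled back to `A`, land in the restricted dual. -/
noncomputable def phi (c : S K A) : (c.1.Quotient →ₗ[K] K) →ₗ[K] ↥(restrictedDual K A) where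
  toFun f := ⟨f ∘ₗ mkL c.1, ⟨c.1, c.2, fun a ha => by
    have h0 : (a : c.1.Quotient) = ((0 : A) : c.1.Quotient) := (RingCon.eq _).2 ha
    show f (a : c.1.Quotient) = 0
    rw [h0]; simpa using map_zero f⟩⟩
  map_add' f g := Subtype.ext (LinearMap.ext fun a => rfl)
  map_smul' k f := Subtype.ext (LinearMap.ext fun a => rfl)

@[simp] theorem phi_apply (c : S K A) (f : c.1.Quotient →ₗ[K] K) (a : A) :
    ((phi c f) : A →ₗ[K] K) a = f (a : c.1.Quotient) := rfl

theorem dual_eq_of_forall {V : Type*} [AddCommGroup V] [Module K V] {x y : V}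
    (h : ∀ f : V →ₗ[K] K, f x = f y) : x = y := by
  have := (Module.forall_dual_apply_eq_zero_iff K (x - y)).1 (fun f => by
    simp [map_sub, h f])
  exact sub_eq_zero.1 this

end PaperStmt

/-- **Transposing a coalgebra morphism `v : A° → B°`.** Let `v` be a `K`-linear map between
the restricted duals which is a morphism of coalgebras: it preserves the counit
(`(v α)(1) = α(1)`) and the comultiplication (whenever `α(a a') = ∑ₖ βₖ(a) γₖ(a')` is a
decomposition of `Δα` within `A°`, then `(v α)(b b') = ∑ₖ (v βₖ)(b) (v γₖ)(b')`).  Then for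
every two-sided ideal `I` of `A` of finite codimension (congruence `c`) there is a
two-sided ideal `J` of `B` of finite codimension (congruence `d`) with
`v((A/I)*) ⊆ (B/J)*`, i.e. `v α` vanishes on `J` whenever `α` vanishes on `I`; and the
transposed map `u_I : B/J → A/I` (characterized by `(v α)(b) = α(u_I(b))`, i.e.
`(v α) b = α a` whenever `u (b mod J) = a mod I`) is a homomorphism of `K`-algebras. -/
theorem coalgebra_morphism_transpose
    {B : Type*} [Ring B] [Algebra K B]
    (v : ↥(restrictedDual K A) →ₗ[K] ↥(restrictedDual K B))
    (hcounit : ∀ α : ↥(restrictedDual K A), (v α).1 1 = α.1 1)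
    (hcomul : ∀ (α : ↥(restrictedDual K A)) (N : ℕ)
        (β γ : Fin N → ↥(restrictedDual K A)),
        (∀ a a' : A, α.1 (a * a') = ∑ k, (β k).1 a * (γ k).1 a') →
        ∀ b b' : B, (v α).1 (b * b') = ∑ k, (v (β k)).1 b * (v (γ k)).1 b') :
    ∀ c : S K A, ∃ d : S K B,
      (∀ (α : A →ₗ[K] K) (hmem : α ∈ restrictedDual K A),
        (∀ a : A, c.1 a 0 → α a = 0) →
        ∀ b : B, d.1 b 0 → (v ⟨α, hmem⟩).1 b = 0) ∧
      ∃ u : d.1.Quotient →ₐ[K] c.1.Quotient,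
        ∀ (α : A →ₗ[K] K) (hmem : α ∈ restrictedDual K A),
          (∀ a : A, c.1 a 0 → α a = 0) →
          ∀ (b : B) (a : A),
            u (b : d.1.Quotient) = (a : c.1.Quotient) → (v ⟨α, hmem⟩).1 b = α a := by
  classical
  intro c
  haveI : FiniteDimensional K c.1.Quotient := c.2
  let bQ : Module.Basis (Fin (Module.finrank K c.1.Quotient)) K c.1.Quotient := Module.finBasis K _
  -- choose a finite-codimensional congruence for each basis functional
  have H : ∀ i, ∃ e : RingCon B, FiniteDimensional K e.Quotient ∧
      ∀ b : B, e b 0 → (v (phi c (bQ.coord i))).1 b = 0 :=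
    fun i => (v (phi c (bQ.coord i))).2
  choose e he1 he2 using H
  haveI : ∀ i, FiniteDimensional K (e i).Quotient := he1
  let dcon : RingCon B := ⨅ i, e i
  have hle : ∀ i, dcon ≤ e i := fun i => iInf_le e i
  have hdrel : ∀ b b' : B, (∀ i, e i b b') → dcon b b' := by
    intro b b' h
    show ⇑dcon b b'
    rw [show ⇑dcon = ⨅ i, ⇑(e i) from RingCon.coe_iInf e]
    simp only [iInf_apply, iInf_Prop_eq]
    exact h
  haveI hdfin : FiniteDimensional K dcon.Quotient := by
    have hinj : Function.Injective
        (LinearMap.pi (fun i => (factorAlg (K := K) (hle i)).toLinearMap)) := by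
      intro x y hxy
      induction x using Quotient.inductionOn' with | h a => ?_
      induction y using Quotient.inductionOn' with | h b => ?_
      have hi : ∀ i, (e i) a b := by
        intro i
        have := congrFun hxy i
        exact (RingCon.eq _).1 this
      exact (RingCon.eq _).2 (hdrel a b hi)
    exact FiniteDimensional.of_injective _ hinj
  -- the transposed map on `B`
  let w : B →ₗ[K] c.1.Quotient :=
    ∑ i, ((v (phi c (bQ.coord i))).1).smulRight (bQ i)
  have hwapp : ∀ b : B, w b = ∑ i, (v (phi c (bQ.coord i))).1 b • bQ i := by
    intro b; simp [w]
  have hP : ∀ (f : c.1.Quotient →ₗ[K] K) (b : B), f (w b) = (v (phi c f)).1 b := by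
    intro f b
    have hf : f = ∑ i, f (bQ i) • bQ.coord i := (bQ.sum_dual_apply_smul_coord f).symm
    have lhs : f (w b) = ∑ i, (v (phi c (bQ.coord i))).1 b * f (bQ i) := by
      rw [hwapp, map_sum]
      simp [smul_eq_mul]
    rw [lhs]
    conv_rhs => rw [hf]
    rw [map_sum, map_sum]
    have : ((∑ i, v (phi c (f (bQ i) • bQ.coord i)) : ↥(restrictedDual K B)) : B →ₗ[K] K) b
        = ∑ i, (v (phi c (f (bQ i) • bQ.coord i))).1 b := by
      rw [Submodule.coe_sum]
      simp
    rw [this]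
    refine Finset.sum_congr rfl fun i _ => ?_
    rw [map_smul, map_smul]
    simp [mul_comm]
  have hw0 : ∀ b : B, dcon b 0 → w b = 0 := by
    intro b hb
    have h0 : ∀ i, (v (phi c (bQ.coord i))).1 b = 0 := fun i => he2 i b (hle i hb)
    rw [hwapp]
    simp [h0]
  have hwcongr : ∀ b b' : B, dcon b b' → w b = w b' := by
    intro b b' h
    have h2 : dcon (b - b') 0 := by simpa using dcon.sub h (dcon.refl b')
    have h3 := hw0 _ h2
    rw [map_sub] at h3
    exact sub_eq_zero.1 h3
  have hx : ∀ (f : c.1.Quotient →ₗ[K] K) (x y : c.1.Quotient),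
      f (x * y) = ∑ i, bQ.coord i x * f (bQ i * y) := by
    intro f x y
    conv_lhs => rw [← bQ.sum_repr x]
    rw [Finset.sum_mul, map_sum]
    refine Finset.sum_congr rfl fun i _ => ?_
    rw [smul_mul_assoc, map_smul, smul_eq_mul, Module.Basis.coord_apply]
  have hdecomp : ∀ (f : c.1.Quotient →ₗ[K] K) (a a' : A),
      (phi c f).1 (a * a') =
        ∑ i, (phi c (bQ.coord i)).1 a *
          (phi c (f ∘ₗ LinearMap.mulLeft K (bQ i))).1 a' := by
    intro f a a'
    show f ((a * a' : A) : c.1.Quotient) = _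
    rw [RingCon.coe_mul]
    exact hx f _ _
  have hwmul : ∀ b b' : B, w (b * b') = w b * w b' := by
    intro b b'
    apply dual_eq_of_forall (K := K)
    intro f
    rw [hP f (b * b'),
      hcomul (phi c f) _ (fun i => phi c (bQ.coord i))
        (fun i => phi c (f ∘ₗ LinearMap.mulLeft K (bQ i))) (hdecomp f) b b',
      hx f (w b) (w b')]
    refine (Finset.sum_congr rfl fun i _ => ?_).symm
    rw [← hP (bQ.coord i) b, ← hP (f ∘ₗ LinearMap.mulLeft K (bQ i)) b']
    rfl
  have hwone : w 1 = 1 := by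
    apply dual_eq_of_forall (K := K)
    intro f
    rw [hP f 1, hcounit (phi c f)]
    show f ((1 : A) : c.1.Quotient) = f 1
    norm_cast
  -- lifting functionals vanishing on `c` to the quotient
  have lift : ∀ (α : A →ₗ[K] K), (∀ a : A, c.1 a 0 → α a = 0) →
      ∃ f : c.1.Quotient →ₗ[K] K, ∀ a : A, f (a : c.1.Quotient) = α a := by
    intro α hα
    have hc : ∀ a a' : A, c.1 a a' → α a = α a' := by
      intro a a' h
      have h2 : α (a - a') = 0 := hα _ (by simpa using c.1.sub h (c.1.refl a'))
      rw [map_sub] at h2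
      exact sub_eq_zero.1 h2
    exact ⟨{ toFun := fun x => Quotient.liftOn' x α (fun a a' h => hc a a' h)
             map_add' := fun x y => Quotient.inductionOn₂' x y (fun a b => map_add α a b)
             map_smul' := fun k x => Quotient.inductionOn' x (fun a => map_smul α k a) },
           fun a => rfl⟩
  refine ⟨⟨dcon, hdfin⟩, ?_, ?_⟩
  · intro α hmem hα b hb
    obtain ⟨f, hf⟩ := lift α hα
    have hsub : (⟨α, hmem⟩ : ↥(restrictedDual K A)) = phi c f :=
      Subtype.ext (LinearMap.ext fun a => (hf a).symm)
    rw [hsub, ← hP f b, hw0 b hb, map_zero]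
  · refine ⟨{ toFun := fun x => Quotient.liftOn' x w (fun b b' h => hwcongr b b' h)
              map_one' := hwone
              map_mul' := fun x y => Quotient.inductionOn₂' x y (fun b b' => hwmul b b')
              map_zero' := map_zero w
              map_add' := fun x y => Quotient.inductionOn₂' x y (fun b b' => map_add w b b')
              commutes' := fun k => by
                show w (algebraMap K B k) = algebraMap K c.1.Quotient k
                rw [Algebra.algebraMap_eq_smul_one, Algebra.algebraMap_eq_smul_one,
                  map_smul, hwone] }, ?_⟩
    intro α hmem hα b a hub
    obtain ⟨f, hf⟩ := lift α hα
    have hsub : (⟨α, hmem⟩ : ↥(restrictedDual K A)) = phi c f :=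
      Subtype.ext (LinearMap.ext fun a' => (hf a').symm)
    have hwb : w b = (a : c.1.Quotient) := hub
    rw [hsub, ← hP f b, hwb, hf a]
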